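/- Let D be a real 2×2 matrix with complex-conjugate eigenvalues α ± iβ (β ≠ 0), so that det D = α² + β². Then for every invertible real 2×2 matrix C̃, setting M̃ = C̃ᵀC̃, one has λ_max((C̃ᵀ)⁻¹·Dᵀ·M̃·D·C̃⁻¹) ≥ α² + β². In other words, the stretching factor α² + β² achieved by the eigenbasis norm (Case I of the optimal-norm computation) is minimal among all weighted norms given by symmetric positive-definite matrices. -/

import Mathlib

open Matrix

/-- Largest eigenvalue of a real matrix, as the supremum of its real spectrum. -/
noncomputable def lambdaMax {n : ℕ} (S : Matrix (Fin n) (Fin n) ℝ) : ℝ :=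
  sSup (spectrum ℝ S)

/-- Weighted `M`-norm of a vector: `‖y‖_M = sqrt (yᵀ M y)`. -/
noncomputable def Mnorm {n : ℕ} (M : Matrix (Fin n) (Fin n) ℝ) (y : Fin n → ℝ) : ℝ :=
  Real.sqrt (y ⬝ᵥ (M *ᵥ y))

/-- Closed ball of radius `δ` about `x` in the `M`-norm. -/
def Mball {n : ℕ} (M : Matrix (Fin n) (Fin n) ℝ) (x : Fin n → ℝ) (δ : ℝ) :
    Set (Fin n → ℝ) :=
  {y | Mnorm M (y - x) ≤ δ}

/-- Jacobian matrix of `f : ℝⁿ → ℝⁿ` at `x`. -/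
noncomputable def jacobian {n : ℕ} (f : (Fin n → ℝ) → (Fin n → ℝ)) (x : Fin n → ℝ) :
    Matrix (Fin n) (Fin n) ℝ :=
  LinearMap.toMatrix' (fderiv ℝ f x).toLinearMap

set_option maxHeartbeats 1000000

lemma spec_char (S : Matrix (Fin 2) (Fin 2) ℝ) (x : ℝ) :
    x ∈ spectrum ℝ S ↔ x ^ 2 - S.trace * x + S.det = 0 := by
  rw [spectrum.mem_iff, Matrix.isUnit_iff_isUnit_det, isUnit_iff_ne_zero, not_ne_iff]
  constructor
  · intro h
    rw [← h]
    simp [Matrix.det_fin_two, Matrix.trace_fin_two, Matrix.algebraMap_matrix_apply]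
    ring
  · intro h
    rw [Matrix.det_fin_two, Matrix.trace_fin_two] at *
    simp [Matrix.algebraMap_matrix_apply]
    nlinarith [h]


/-- optimality of Case I. If `D` has complex-conjugate
eigenvalues `α ± iβ` (`β ≠ 0`), i.e. `tr D = 2α` and `det D = α² + β²`, then
every weighted norm `M̃ = C̃ᵀC̃` gives a squared stretching factor at least
`α² + β²`. -/
theorem case_I_optimal (D : Matrix (Fin 2) (Fin 2) ℝ) (α β : ℝ) (hβ : β ≠ 0)
    (htr : D.trace = 2 * α) (hdet : D.det = α ^ 2 + β ^ 2) :
    ∀ C : Matrix (Fin 2) (Fin 2) ℝ, IsUnit C.det →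
      α ^ 2 + β ^ 2 ≤ lambdaMax ((Cᵀ)⁻¹ * Dᵀ * (Cᵀ * C) * D * C⁻¹) := by
  intro C hC
  set B := C * D * C⁻¹ with hB
  have hA : (Cᵀ)⁻¹ * Dᵀ * (Cᵀ * C) * D * C⁻¹ = Bᵀ * B := by
    simp [hB, Matrix.transpose_mul, Matrix.transpose_nonsing_inv, Matrix.mul_assoc]
  have hdB : B.det = α ^ 2 + β ^ 2 := by
    have hC0 : C.det ≠ 0 := hC.ne_zero
    rw [hB, Matrix.det_mul, Matrix.det_mul, Matrix.det_nonsing_inv, hdet]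
    field_simp [Ring.inverse_eq_inv']
    rw [Ring.inverse_eq_inv']; exact mul_inv_cancel₀ hC0
  set S : Matrix (Fin 2) (Fin 2) ℝ := Bᵀ * B with hS
  set t : ℝ := S.trace with ht
  set d : ℝ := S.det with hd
  -- trace and det facts
  have hdval : d = (α ^ 2 + β ^ 2) ^ 2 := by
    rw [hd, hS, Matrix.det_mul, Matrix.det_transpose, hdB]; ring
  have htval : t = B 0 0 ^ 2 + B 1 0 ^ 2 + B 0 1 ^ 2 + B 1 1 ^ 2 := by
    rw [ht, hS, Matrix.trace_fin_two]
    simp [Matrix.mul_apply, Fin.sum_univ_two, Matrix.transpose_apply]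
    ring
  have hdetB : B 0 0 * B 1 1 - B 0 1 * B 1 0 = α ^ 2 + β ^ 2 := by
    rw [← hdB, Matrix.det_fin_two]
  have htge : 2 * (α ^ 2 + β ^ 2) ≤ t := by
    nlinarith [sq_nonneg (B 0 0 - B 1 1), sq_nonneg (B 0 1 + B 1 0)]
  have hpos : (0:ℝ) < α ^ 2 + β ^ 2 := by positivity
  have hdisc : 0 ≤ t ^ 2 - 4 * d := by
    nlinarith [sq_nonneg (B 0 0 + B 1 1), sq_nonneg (B 0 1 - B 1 0)]
  set s : ℝ := Real.sqrt (t ^ 2 - 4 * d) with hs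
  have hs0 : 0 ≤ s := Real.sqrt_nonneg _
  have hs2 : s ^ 2 = t ^ 2 - 4 * d := Real.sq_sqrt hdisc
  set lam : ℝ := (t + s) / 2 with hlam
  have hmem : lam ∈ spectrum ℝ S := by
    rw [spec_char, ← ht, ← hd]
    nlinarith [hs2]
  have hub : ∀ x ∈ spectrum ℝ S, x ≤ lam := by
    intro x hx
    rw [spec_char, ← ht, ← hd] at hx
    have h1 : (2 * x - t) ^ 2 = s ^ 2 := by nlinarith
    have h2 : 2 * x - t ≤ s := by
      calc 2 * x - t ≤ |2 * x - t| := le_abs_self _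
        _ = Real.sqrt ((2 * x - t) ^ 2) := (Real.sqrt_sq_eq_abs _).symm
        _ = Real.sqrt (s ^ 2) := by rw [h1]
        _ = s := Real.sqrt_sq hs0
    rw [hlam]; linarith
  have hsup : lam ≤ sSup (spectrum ℝ S) := le_csSup ⟨lam, hub⟩ hmem
  have : α ^ 2 + β ^ 2 ≤ lam := by
    rw [hlam]; nlinarith
  rw [hA]
  unfold lambdaMax
  linarith
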